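/- Let c₁ > 0, c₂ > 0 with c₁ + c₂ ≤ √2, and ρₓ ≥ 0. For n ≥ 1 put ωₙ = n² and ζₙ = (c₁ωₙ⁻¹ + c₂ωₙ)/2, and set γ₀ = 2√(1+ρₓ) / ((c₁+c₂)√(4−(c₁+c₂)²)). Then for every integer n ≥ 1: if 2ζₙ² ≤ 1 then (1 + ρₓωₙ²) ≤ γ₀² · 4ωₙ⁴ζₙ²(1−ζₙ²), and if 2ζₙ² > 1 then (1 + ρₓωₙ²) ≤ γ₀² · ωₙ⁴. -/

import Mathlib

set_option maxHeartbeats 800000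


/-- Key inequality in the proof of Proposition 2: the per-mode squared-gain
lower bounds are dominated by γ₀². -/
theorem stmt_11 (c₁ c₂ : ℝ) (hc₁ : 0 < c₁) (hc₂ : 0 < c₂)
    (hc : c₁ + c₂ ≤ Real.sqrt 2)
    (ρx : ℝ) (hρx : 0 ≤ ρx)
    (ω ζ : ℕ → ℝ)
    (hω : ∀ n, ω n = (n : ℝ) ^ 2)
    (hζ : ∀ n, ζ n = (c₁ * (ω n)⁻¹ + c₂ * ω n) / 2)
    (γ₀ : ℝ)
    (hγ₀ : γ₀ = 2 * Real.sqrt (1 + ρx) /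
      ((c₁ + c₂) * Real.sqrt (4 - (c₁ + c₂) ^ 2))) :
    ∀ n : ℕ, 1 ≤ n →
      (2 * (ζ n) ^ 2 ≤ 1 →
        1 + ρx * (ω n) ^ 2 ≤ γ₀ ^ 2 * (4 * (ω n) ^ 4 * (ζ n) ^ 2 * (1 - (ζ n) ^ 2))) ∧
      (2 * (ζ n) ^ 2 > 1 → 1 + ρx * (ω n) ^ 2 ≤ γ₀ ^ 2 * (ω n) ^ 4) := by
  intro n hn
  set s := c₁ + c₂ with hsdef
  have hs : 0 < s := by positivity
  have hs2 : s ^ 2 ≤ 2 := by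
    nlinarith [Real.sq_sqrt (by norm_num : (0:ℝ) ≤ 2), Real.sqrt_nonneg 2]
  have h4s : (0:ℝ) < 4 - s ^ 2 := by linarith
  have hρ1 : (0:ℝ) ≤ 1 + ρx := by linarith
  have hne : s ^ 2 * (4 - s ^ 2) ≠ 0 := by positivity
  have hγsq : γ₀ ^ 2 * (s ^ 2 * (4 - s ^ 2)) = 4 * (1 + ρx) := by
    rw [hγ₀, div_pow, mul_pow, mul_pow, Real.sq_sqrt hρ1, Real.sq_sqrt h4s.le,
      div_mul_cancel₀ _ hne]
    ring
  have hA : (0:ℝ) ≤ γ₀ ^ 2 := sq_nonneg _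
  -- basic facts about W = ω n
  have hW1 : (1:ℝ) ≤ ω n := by
    rw [hω]
    have : (1:ℝ) ≤ (n : ℝ) := by exact_mod_cast hn
    nlinarith
  have hWpos : (0:ℝ) < ω n := lt_of_lt_of_le one_pos hW1
  set W := ω n with hWdef
  set u := c₁ + c₂ * W ^ 2 with hudef
  have hz : ζ n = u / (2 * W) := by
    rw [hζ n, ← hWdef]
    field_simp [hudef]
    ring
  have hW2 : (1:ℝ) ≤ W ^ 2 := by nlinarith
  have hsu : s ≤ u := by nlinarith [mul_nonneg hc₂.le (by linarith : (0:ℝ) ≤ W ^ 2 - 1)]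
  have hupos : (0:ℝ) < u := by nlinarith
  clear_value s W u
  constructor
  · intro hund
    have hu2 : u ^ 2 ≤ 2 * W ^ 2 := by
      rw [hz] at hund
      have : 2 * (u / (2 * W)) ^ 2 = u ^ 2 / (2 * W ^ 2) := by
        field_simp
      rw [this, div_le_one (by positivity)] at hund
      exact hund
    have hg : 4 * W ^ 4 * (ζ n) ^ 2 * (1 - (ζ n) ^ 2)
        = W ^ 2 * u ^ 2 - u ^ 4 / 4 := by
      rw [hz]; field_simp; ring
    rw [hg]
    -- monotonicity of g(u) = W²u² - u⁴/4 on [s, √2 W]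
    have key1 : (0:ℝ) ≤ (u ^ 2 - s ^ 2) * (4 * W ^ 2 - u ^ 2 - s ^ 2) := by
      have h1 : s ^ 2 ≤ u ^ 2 := by nlinarith
      have h2 : s ^ 2 ≤ 2 * W ^ 2 := by nlinarith
      nlinarith
    have key2 : (0:ℝ) ≤ (W ^ 2 - 1) * s ^ 4 := by
      have : (0:ℝ) ≤ s ^ 4 := by positivity
      nlinarith
    have hgl : W ^ 2 * (s ^ 2 * (4 - s ^ 2)) / 4 ≤ W ^ 2 * u ^ 2 - u ^ 4 / 4 := by
      have hid : W ^ 2 * u ^ 2 - u ^ 4 / 4 - W ^ 2 * (s ^ 2 * (4 - s ^ 2)) / 4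
          = ((u ^ 2 - s ^ 2) * (4 * W ^ 2 - u ^ 2 - s ^ 2) + (W ^ 2 - 1) * s ^ 4) / 4 := by
        ring
      linarith [key1, key2]
    have hmul := mul_le_mul_of_nonneg_left hgl hA
    have heq : γ₀ ^ 2 * (W ^ 2 * (s ^ 2 * (4 - s ^ 2)) / 4) = (1 + ρx) * W ^ 2 := by
      linear_combination (W ^ 2 / 4) * hγsq
    have h1 : 1 + ρx * W ^ 2 ≤ (1 + ρx) * W ^ 2 := by nlinarith
    linarith
  · intro _
    have hAge : 1 + ρx ≤ γ₀ ^ 2 := by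
      nlinarith [mul_nonneg hA (sq_nonneg (s ^ 2 - 2))]
    have hW4 : (1:ℝ) ≤ W ^ 4 := by nlinarith
    have h1 : ρx * W ^ 2 ≤ ρx * W ^ 4 := by
      have : W ^ 2 ≤ W ^ 4 := by nlinarith
      exact mul_le_mul_of_nonneg_left this hρx
    have h2 := mul_le_mul_of_nonneg_right hAge (by positivity : (0:ℝ) ≤ W ^ 4)
    nlinarith [h2, h1, hW4, mul_nonneg hρx (by positivity : (0:ℝ) ≤ W ^ 4)]
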